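/- For every integer n ≥ 1 and every natural number m: if u_m = −1 then f_n is monotone nonincreasing on the interval [m, m+1], and if u_m = 1 then f_n is monotone nondecreasing on [m, m+1]. -/

import Mathlib

/-- The ±1 Thue–Morse sequence: `u n = (-1)^(s₂(n)+1)` where `s₂` is the binary digit sum. -/
def u (n : ℕ) : ℤ := (-1) ^ ((Nat.digits 2 n).sum + 1)

/-- The "Pascal triangle" associated to the Thue–Morse sequence:
`Sig k n` is `Σ^k_n` (k the superscript, n the subscript). -/
def Sig : ℕ → ℕ → ℤ
  | k, 0 => u k
  | 0, _ + 1 => 0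
  | k + 1, n + 1 => Sig k n + Sig k (n + 1)

lemma u_zero : u 0 = -1 := by simp [u]

lemma u_two_mul (m : ℕ) : u (2 * m) = u m := by
  rcases Nat.eq_zero_or_pos m with h | h
  · simp [h]
  · unfold u
    rw [Nat.digits_def' (by norm_num : 1 < 2) (by omega)]
    simp [Nat.mul_div_cancel_left _ (by norm_num : 0 < 2)]

lemma u_two_mul_add_one (m : ℕ) : u (2 * m + 1) = -u m := by
  unfold u
  rw [Nat.digits_def' (by norm_num : 1 < 2) (by omega)]
  have h1 : (2 * m + 1) % 2 = 1 := by omega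
  have h2 : (2 * m + 1) / 2 = m := by omega
  rw [h1, h2]
  simp [pow_add, pow_succ]

lemma u_one : u 1 = 1 := by have := u_two_mul_add_one 0; rw [u_zero] at this; simpa using this

lemma u_sq (m : ℕ) : u m * u m = 1 := by
  unfold u; rw [← pow_add, ← two_mul]; exact Even.neg_one_pow ⟨_, (two_mul _)⟩

lemma Sig_zero (k : ℕ) : Sig k 0 = u k := by cases k <;> rfl
lemma Sig_zero_left (n : ℕ) : Sig 0 (n+1) = 0 := rfl
lemma Sig_succ (k n : ℕ) : Sig (k+1) (n+1) = Sig k n + Sig k (n+1) := rfl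

lemma Sig_one_parity : ∀ m : ℕ, Sig (2*m) 1 = 0 ∧ Sig (2*m+1) 1 = u m := by
  intro m
  induction m with
  | zero => refine ⟨rfl, ?_⟩
            show Sig 1 1 = u 0
            rw [Sig_succ, Sig_zero, Sig_zero_left]; simp
  | succ m ih =>
    obtain ⟨h0, h1⟩ := ih
    have e2 : 2*(m+1) = (2*m+1)+1 := by ring
    have e3 : 2*(m+1)+1 = (2*m+1)+1+1 := by ring
    constructor
    · rw [e2, Sig_succ, Sig_zero, h1, u_two_mul_add_one]; ring
    · have h4 : Sig (2*(m+1)) 1 = 0 := by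
        rw [e2, Sig_succ, Sig_zero, h1, u_two_mul_add_one]; ring
      rw [e3, Sig_succ, Sig_zero, ← e2, h4, u_two_mul]; ring

lemma Sig_one_one : Sig 1 1 = -1 := by
  have := (Sig_one_parity 0).2; simpa [u_zero] using this

lemma Sig_two_one : Sig 2 1 = 0 := by
  have := (Sig_one_parity 1).1; simpa using this

/-- Self-similarity: for `p ≥ 1`, `Sig (m·2^p + j) p = -(u m) · Sig j p` for `j ≤ 2^p`. -/
lemma selfsim : ∀ p, 1 ≤ p → ∀ m j, j ≤ 2^p → Sig (m * 2^p + j) p = -u m * Sig j p := by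
  intro p hp
  induction p, hp using Nat.le_induction with
  | base =>
    intro m j hj
    interval_cases j
    · rw [show m*2^1+0 = 2*m by ring, (Sig_one_parity m).1, show Sig 0 1 = 0 from Sig_zero_left 0]; ring
    · rw [show m*2^1+1 = 2*m+1 by ring, (Sig_one_parity m).2, Sig_one_one]; ring
    · rw [show m*2^1+2 = 2*(m+1) by ring, (Sig_one_parity (m+1)).1, Sig_two_one]; ring
  | succ p hp ih =>
    -- first: Sig (2^(p+1)) (p+1) = 0
    have W : ∀ j, j ≤ 2^p → Sig (2^p + j) (p+1) = Sig (2^p) (p+1) - Sig j (p+1) := by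
      intro j hj
      induction j with
      | zero => simp [show Sig 0 (p+1) = 0 from Sig_zero_left p]
      | succ j ihj =>
        have hj' : j ≤ 2^p := by omega
        rw [← Nat.add_assoc, Sig_succ, ihj hj']
        have := ih 1 j hj'
        rw [one_mul] at this
        rw [this, u_one, Sig_succ]
        ring
    have Z : Sig (2^(p+1)) (p+1) = 0 := by
      have := W (2^p) le_rfl
      rw [show (2:ℕ)^p + 2^p = 2^(p+1) by ring] at this
      linarith
    intro m
    induction m with
    | zero => intro j hj; rw [u_zero]; simp
    | succ m ihm =>
      intro j hj
      induction j with
      | zero =>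
        rw [Nat.add_zero, Sig_zero_left, show (m+1)*2^(p+1) = m*2^(p+1) + 2^(p+1) by ring,
            ihm (2^(p+1)) le_rfl, Z]
        ring
      | succ j ihj =>
        have hj' : j ≤ 2^(p+1) := by omega
        have hstep : Sig ((m+1)*2^(p+1)+j) p = -u (m+1) * Sig j p := by
          by_cases hcase : j < 2^p
          · have : (m+1)*2^(p+1)+j = (2*(m+1))*2^p + j := by ring
            rw [this, ih (2*(m+1)) j (le_of_lt hcase), u_two_mul]
          · set j' := j - 2^p with hj'def
            have hjj : j = 2^p + j' := by omega
            have hj'le : j' ≤ 2^p := by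
              have : j ≤ 2^(p+1) - 1 := by omega
              have h2 : (2:ℕ)^(p+1) = 2^p + 2^p := by ring
              omega
            have e1 : (m+1)*2^(p+1)+j = (2*(m+1)+1)*2^p + j' := by
              calc (m+1)*2^(p+1)+j = (2*(m+1))*2^p + (2^p + j') := by
                    rw [← hjj]; ring
                _ = (2*(m+1)+1)*2^p + j' := by ring
            rw [e1, ih (2*(m+1)+1) j' hj'le, u_two_mul_add_one]
            have e2 : Sig j p = -Sig j' p := by
              have := ih 1 j' hj'le
              rw [one_mul, u_one] at this
              rw [hjj, this]; ring
            rw [e2]; ring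
        rw [← Nat.add_assoc, Sig_succ, ihj hj', hstep, Sig_succ]
        ring

/-- The reflection identity on the second half-block. -/
lemma Sig_W (p : ℕ) (hp : 1 ≤ p) : ∀ j, j ≤ 2^p →
    Sig (2^p + j) (p+1) = Sig (2^p) (p+1) - Sig j (p+1) := by
  intro j hj
  induction j with
  | zero => simp [show Sig 0 (p+1) = 0 from Sig_zero_left p]
  | succ i ihi =>
    have hile : i ≤ 2^p := by omega
    rw [← Nat.add_assoc, Sig_succ, ihi hile]
    have := selfsim p hp 1 i hile
    rw [one_mul, u_one] at this
    rw [this, Sig_succ]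
    ring

lemma Sig_nonpos' : ∀ p, ∀ j, j ≤ 2^p → (1 ≤ p → Sig j p ≤ 0) := by
  intro p
  induction p with
  | zero => intro j hj h; omega
  | succ p ih =>
    -- first, nonpos on [0, 2^p] by accumulating nonpositive increments, for p ≥ 1;
    -- for p = 0 handle directly
    rcases Nat.eq_zero_or_pos p with hp0 | hp1
    · subst hp0
      intro j hj _
      interval_cases j
      · exact le_of_eq (Sig_zero_left 0)
      · rw [Sig_one_one]; norm_num
      · rw [Sig_two_one]
    · -- p ≥ 1
      have half : ∀ j, j ≤ 2^p → Sig j (p+1) ≤ 0 := by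
        intro j hj
        induction j with
        | zero => exact le_of_eq (Sig_zero_left p)
        | succ j ihj =>
          have hj' : j ≤ 2^p := by omega
          rw [Sig_succ]
          have h1 : Sig j p ≤ 0 := ih j hj' hp1
          have h2 : Sig j (p+1) ≤ 0 := ihj hj'
          linarith
      have decr : ∀ j, j ≤ 2^p → Sig (2^p) (p+1) ≤ Sig j (p+1) := by
        intro j hj
        -- show Sig b (p+1) antitone up to 2^p
        have : ∀ d, j + d ≤ 2^p → Sig (j + d) (p+1) ≤ Sig j (p+1) := by
          intro d
          induction d with
          | zero => intro _; exact le_rfl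
          | succ d ihd =>
            intro hd
            have hd' : j + d ≤ 2^p := by omega
            have h1 : Sig (j+d) p ≤ 0 := ih (j+d) hd' hp1
            have := ihd hd'
            rw [show j + (d+1) = (j+d)+1 by ring, Sig_succ]
            linarith
        have := this (2^p - j) (by omega)
        rwa [show j + (2^p - j) = 2^p by omega] at this
      intro j hj _
      by_cases hcase : j ≤ 2^p
      · exact half j hcase
      · set j' := j - 2^p with hj'def
        have hjj : j = 2^p + j' := by omega
        have hj'le : j' ≤ 2^p := by
          have h2 : (2:ℕ)^(p+1) = 2^p + 2^p := by ring
          omega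
        rw [hjj, Sig_W p hp1 j' hj'le]
        have := decr j' hj'le
        linarith

/-- Key sign lemma: `0 ≤ u (k / 2^p) * Sig k p`. -/
lemma key_sign (p k : ℕ) : 0 ≤ u (k / 2^p) * Sig k p := by
  rcases Nat.eq_zero_or_pos p with hp0 | hp1
  · subst hp0
    simp only [pow_zero, Nat.div_one, Sig_zero]
    rw [u_sq]; norm_num
  · set m := k / 2^p with hm
    set j := k % 2^p with hj
    have hk : k = m * 2^p + j := by
      rw [hm, hj, Nat.mul_comm]; exact (Nat.div_add_mod k (2^p)).symm
    have hjlt : j < 2^p := Nat.mod_lt _ (by positivity)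
    rw [hk, selfsim p hp1 m j (le_of_lt hjlt)]
    have h1 : Sig j p ≤ 0 := Sig_nonpos' p j (le_of_lt hjlt) hp1
    have h2 : u m * u m = 1 := u_sq m
    nlinarith

/-- Monotonicity of `k ↦ u m * Sig k (p+1)` on the block `[m·2^p, (m+1)·2^p]`. -/
lemma Sig_chain (p m : ℕ) : ∀ a b, m * 2^p ≤ a → a ≤ b → b ≤ (m+1) * 2^p →
    u m * Sig a (p+1) ≤ u m * Sig b (p+1) := by
  intro a b ha hab hb
  induction b, hab using Nat.le_induction with
  | base => exact le_rfl
  | succ b hab ihb =>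
    have hb' : b ≤ (m+1)*2^p := by omega
    have hblt : b < (m+1)*2^p := by omega
    have hdiv : b / 2^p = m := by
      rcases Nat.lt_or_ge b ((m+1) * 2^p) with h | h
      · exact Nat.div_eq_of_lt_le (by omega) (by omega)
      · omega
    have hkey := key_sign p b
    rw [hdiv] at hkey
    have := ihb hb'
    rw [Sig_succ]
    nlinarith [hkey]


/-- The renormalized points `x^k_n = 2^{-(n-1)(n-2)/2} Σ^k_n`. -/
noncomputable def xkn (n k : ℕ) : ℝ := (Sig k n : ℝ) / 2 ^ ((n - 1) * (n - 2) / 2)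

/-- The piecewise linear interpolation `f n` of the points `x^k_n` at `k/2^{n-1}`,
vanishing on the nonpositive reals. -/
noncomputable def f (n : ℕ) (x : ℝ) : ℝ :=
  if x ≤ 0 then 0
  else
    xkn n ⌊(2 : ℝ) ^ (n - 1) * x⌋₊ +
      (2 : ℝ) ^ (n - 1) * (x - (⌊(2 : ℝ) ^ (n - 1) * x⌋₊ : ℝ) / 2 ^ (n - 1)) *
        (xkn n (⌊(2 : ℝ) ^ (n - 1) * x⌋₊ + 1) - xkn n ⌊(2 : ℝ) ^ (n - 1) * x⌋₊)

lemma xkn_chain (p m a b : ℕ) (ha : m * 2^p ≤ a) (hab : a ≤ b) (hb : b ≤ (m+1) * 2^p) :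
    (u m : ℝ) * xkn (p+1) a ≤ (u m : ℝ) * xkn (p+1) b := by
  have hchain := Sig_chain p m a b ha hab hb
  unfold xkn
  have hc : (0:ℝ) < 2 ^ (((p+1) - 1) * ((p+1) - 2) / 2) := by positivity
  rw [← mul_div_assoc, ← mul_div_assoc, div_le_div_iff_of_pos_right hc]
  exact_mod_cast hchain


lemma f_eq (p : ℕ) (x : ℝ) (hx : 0 ≤ x) :
    f (p+1) x = xkn (p+1) ⌊(2:ℝ)^p * x⌋₊ +
      ((2:ℝ)^p * x - (⌊(2:ℝ)^p * x⌋₊ : ℝ)) *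
        (xkn (p+1) (⌊(2:ℝ)^p * x⌋₊ + 1) - xkn (p+1) ⌊(2:ℝ)^p * x⌋₊) := by
  rcases eq_or_lt_of_le hx with h0 | hpos
  · rw [f, if_pos (le_of_eq h0.symm), ← h0]
    simp [xkn, Sig_zero_left]
  · rw [f, if_neg (not_le.mpr hpos)]
    simp only [Nat.add_sub_cancel]
    have hK : (2:ℝ)^p ≠ 0 := by positivity
    set k := ⌊(2:ℝ)^p * x⌋₊ with hk
    have : (2:ℝ)^p * (x - (k:ℝ)/2^p) = 2^p * x - k := by field_simp
    rw [this]

lemma key_real (p m : ℕ) {x y : ℝ} (hx : x ∈ Set.Icc (m:ℝ) (m+1))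
    (hy : y ∈ Set.Icc (m:ℝ) (m+1)) (hxy : x ≤ y) :
    (u m : ℝ) * f (p+1) x ≤ (u m : ℝ) * f (p+1) y := by
  obtain ⟨hx1, hx2⟩ := hx
  obtain ⟨hy1, hy2⟩ := hy
  rcases eq_or_lt_of_le hxy with rfl | hlt
  · exact le_rfl
  have hm0 : (0:ℝ) ≤ (m:ℝ) := Nat.cast_nonneg m
  have hx0 : (0:ℝ) ≤ x := le_trans hm0 hx1
  have hy0 : (0:ℝ) ≤ y := le_trans hx0 (le_of_lt hlt)
  have hK : (0:ℝ) < 2^p := by positivity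
  set K : ℝ := 2^p with hKdef
  set kx := ⌊K * x⌋₊ with hkx
  set ky := ⌊K * y⌋₊ with hky
  have hKx0 : 0 ≤ K * x := by positivity
  have hKy0 : 0 ≤ K * y := by positivity
  have hcast : ∀ r : ℕ, ((r * 2^p : ℕ) : ℝ) = (r:ℝ) * K := by
    intro r; push_cast; rw [hKdef]
  -- bounds on kx, ky
  have hkx1 : m * 2^p ≤ kx := by
    apply Nat.le_floor
    rw [hcast]
    nlinarith
  have hky1 : m * 2^p ≤ ky := by
    apply Nat.le_floor
    rw [hcast]
    nlinarith
  have hky2 : ky ≤ (m+1) * 2^p := by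
    have h1 : ⌊K * y⌋₊ ≤ ⌊(((m+1) * 2^p : ℕ) : ℝ)⌋₊ := by
      apply Nat.floor_mono
      rw [hcast]
      push_cast
      nlinarith
    rwa [Nat.floor_natCast] at h1
  have hkxlt : kx < (m+1) * 2^p := by
    rw [hkx, Nat.floor_lt hKx0, hcast]
    push_cast
    nlinarith
  have hkxky : kx ≤ ky := Nat.floor_mono (by nlinarith)
  -- floor inequalities
  have hfl_x : (kx : ℝ) ≤ K * x := Nat.floor_le hKx0
  have hfl_x' : K * x < (kx : ℝ) + 1 := Nat.lt_floor_add_one _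
  have hfl_y : (ky : ℝ) ≤ K * y := Nat.floor_le hKy0
  -- G and its monotonicity
  set G : ℕ → ℝ := fun k => (u m : ℝ) * xkn (p+1) k with hG
  have Gmono : ∀ a b : ℕ, m * 2^p ≤ a → a ≤ b → b ≤ (m+1) * 2^p → G a ≤ G b := by
    intro a b ha hab hb
    exact xkn_chain p m a b ha hab hb
  have hfx : (u m : ℝ) * f (p+1) x = G kx + (K * x - kx) * (G (kx+1) - G kx) := by
    rw [f_eq p x hx0, hG]; push_cast; ring
  have hfy : (u m : ℝ) * f (p+1) y = G ky + (K * y - ky) * (G (ky+1) - G ky) := by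
    rw [f_eq p y hy0, hG]; push_cast; ring
  have hdx0 : 0 ≤ K * x - kx := by linarith
  have hdx1 : K * x - kx ≤ 1 := by linarith
  have hdy0 : 0 ≤ K * y - ky := by linarith
  -- G ky ≤ u * f y
  have hyG : G ky ≤ (u m : ℝ) * f (p+1) y := by
    rw [hfy]
    by_cases hc : ky < (m+1) * 2^p
    · have h1 : G ky ≤ G (ky+1) := Gmono ky (ky+1) hky1 (by omega) (by omega)
      have h2 : 0 ≤ (K * y - ky) * (G (ky+1) - G ky) :=
        mul_nonneg hdy0 (by linarith)
      linarith
    · have hkyeq : ky = (m+1) * 2^p := by omega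
      have hyle : K * y ≤ (ky : ℝ) := by
        rw [hkyeq]
        push_cast
        nlinarith
      have h0 : K * y - ky = 0 := le_antisymm (by linarith) hdy0
      rw [h0]
      simp
  by_cases hkk : kx = ky
  · rw [hfx, hfy, ← hkk]
    have h1 : G kx ≤ G (kx+1) := Gmono kx (kx+1) hkx1 (by omega) (by omega)
    have hdd : K * x - kx ≤ K * y - kx := by
      have := mul_le_mul_of_nonneg_left hxy hK.le
      linarith
    have h2 : (K * x - kx) * (G (kx+1) - G kx) ≤ (K * y - kx) * (G (kx+1) - G kx) :=
      mul_le_mul_of_nonneg_right hdd (by linarith)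
    linarith
  · have hlt2 : kx + 1 ≤ ky := by omega
    have c1 : (u m : ℝ) * f (p+1) x ≤ G (kx+1) := by
      rw [hfx]
      have h1 : G kx ≤ G (kx+1) := Gmono kx (kx+1) hkx1 (by omega) (by omega)
      have h2 : (K * x - kx) * (G (kx+1) - G kx) ≤ 1 * (G (kx+1) - G kx) :=
        mul_le_mul_of_nonneg_right hdx1 (by linarith)
      linarith
    have c2 : G (kx+1) ≤ G ky := Gmono (kx+1) ky (by omega) hlt2 hky2
    linarith

theorem f_monotone_on_unit_intervals (n : ℕ) (hn : 1 ≤ n) (m : ℕ) :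
    (u m = -1 → AntitoneOn (f n) (Set.Icc (m : ℝ) (m + 1))) ∧
    (u m = 1 → MonotoneOn (f n) (Set.Icc (m : ℝ) (m + 1))) := by
  obtain ⟨p, rfl⟩ : ∃ p, n = p + 1 := ⟨n - 1, by omega⟩
  constructor
  · intro h x hx y hy hxy
    have hkr := key_real p m hx hy hxy
    rw [h] at hkr
    push_cast at hkr
    linarith
  · intro h x hx y hy hxy
    have hkr := key_real p m hx hy hxy
    rw [h] at hkr
    push_cast at hkr
    linarith
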